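/- For any two orthonormal pairs (v₁, v₂) and (w₁, w₂) of vectors in ℝ⁷ there exists a linear isometry g of ℝ⁷ satisfying φ(g x, g y, g z) = φ(x, y, z) for all x, y, z ∈ ℝ⁷, g v₁ = w₁ and g v₂ = w₂. (The stabilizer G₂ of φ acts transitively on orthonormal 2-frames, hence on the oriented Grassmannian of 2-planes in ℝ⁷.) -/

import Mathlib

noncomputable section

open scoped InnerProductSpace

/-- `3 × 3` determinant of coordinates `a, b, c` of `(x, y, z)`. -/
def det3 (a b c : Fin 7) (x y z : EuclideanSpace ℝ (Fin 7)) : ℝ :=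
  x a * (y b * z c - y c * z b) - x b * (y a * z c - y c * z a) +
    x c * (y a * z b - y b * z a)

/-- The associative calibration `φ` of Harvey–Lawson on `ℝ⁷`. -/
def phi (x y z : EuclideanSpace ℝ (Fin 7)) : ℝ :=
  det3 4 5 6 x y z - det3 4 0 1 x y z - det3 4 2 3 x y z -
    det3 5 0 2 x y z - det3 5 3 1 x y z - det3 6 0 3 x y z - det3 6 1 2 x y z

local notation "E7" => EuclideanSpace ℝ (Fin 7)

def cross7 (x y : E7) : E7 :=
  WithLp.toLp 2 ![x 4*y 1 - x 1*y 4 + x 5*y 2 - x 2*y 5 + x 6*y 3 - x 3*y 6,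
    x 0*y 4 - x 4*y 0 + x 3*y 5 - x 5*y 3 + x 6*y 2 - x 2*y 6,
    x 4*y 3 - x 3*y 4 + x 0*y 5 - x 5*y 0 + x 1*y 6 - x 6*y 1,
    x 2*y 4 - x 4*y 2 + x 5*y 1 - x 1*y 5 + x 0*y 6 - x 6*y 0,
    x 5*y 6 - x 6*y 5 - x 0*y 1 + x 1*y 0 - x 2*y 3 + x 3*y 2,
    x 6*y 4 - x 4*y 6 - x 0*y 2 + x 2*y 0 + x 1*y 3 - x 3*y 1,
    x 4*y 5 - x 5*y 4 - x 0*y 3 + x 3*y 0 - x 1*y 2 + x 2*y 1]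

lemma fm0 (h : 0 < 7) : (⟨0, h⟩ : Fin 7) = 0 := rfl
lemma fm1 (h : 1 < 7) : (⟨1, h⟩ : Fin 7) = 1 := rfl
lemma fm2 (h : 2 < 7) : (⟨2, h⟩ : Fin 7) = 2 := rfl
lemma fm3 (h : 3 < 7) : (⟨3, h⟩ : Fin 7) = 3 := rfl
lemma fm4 (h : 4 < 7) : (⟨4, h⟩ : Fin 7) = 4 := rfl
lemma fm5 (h : 5 < 7) : (⟨5, h⟩ : Fin 7) = 5 := rfl
lemma fm6 (h : 6 < 7) : (⟨6, h⟩ : Fin 7) = 6 := rfl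

lemma cr0 (x y : E7) : cross7 x y 0 = x 4*y 1 - x 1*y 4 + x 5*y 2 - x 2*y 5 + x 6*y 3 - x 3*y 6 := rfl
lemma cr1 (x y : E7) : cross7 x y 1 = x 0*y 4 - x 4*y 0 + x 3*y 5 - x 5*y 3 + x 6*y 2 - x 2*y 6 := rfl
lemma cr2 (x y : E7) : cross7 x y 2 = x 4*y 3 - x 3*y 4 + x 0*y 5 - x 5*y 0 + x 1*y 6 - x 6*y 1 := rfl
lemma cr3 (x y : E7) : cross7 x y 3 = x 2*y 4 - x 4*y 2 + x 5*y 1 - x 1*y 5 + x 0*y 6 - x 6*y 0 := rfl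
lemma cr4 (x y : E7) : cross7 x y 4 = x 5*y 6 - x 6*y 5 - x 0*y 1 + x 1*y 0 - x 2*y 3 + x 3*y 2 := rfl
lemma cr5 (x y : E7) : cross7 x y 5 = x 6*y 4 - x 4*y 6 - x 0*y 2 + x 2*y 0 + x 1*y 3 - x 3*y 1 := rfl
lemma cr6 (x y : E7) : cross7 x y 6 = x 4*y 5 - x 5*y 4 - x 0*y 3 + x 3*y 0 - x 1*y 2 + x 2*y 1 := rfl

lemma inner7 (x y : E7) : ⟪x, y⟫_ℝ = x 0*y 0 + x 1*y 1 + x 2*y 2 + x 3*y 3 + x 4*y 4 + x 5*y 5 + x 6*y 6 := by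
  simp [PiLp.inner_apply, Fin.sum_univ_seven, RCLike.inner_apply, conj_trivial]; ring

lemma inner_cross7 (x y z : E7) : ⟪cross7 x y, z⟫_ℝ = phi x y z := by
  rw [inner7]
  simp only [cr0, cr1, cr2, cr3, cr4, cr5, cr6, phi, det3]
  ring

lemma c7_self (x : E7) : cross7 x x = 0 := by
  ext i
  fin_cases i <;>
    simp only [fm0, fm1, fm2, fm3, fm4, fm5, fm6, cr0, cr1, cr2, cr3, cr4, cr5, cr6,
      PiLp.zero_apply] <;> ring

lemma c7_anticomm (x y : E7) : cross7 y x = -cross7 x y := by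
  ext i
  fin_cases i <;>
    simp only [fm0, fm1, fm2, fm3, fm4, fm5, fm6, cr0, cr1, cr2, cr3, cr4, cr5, cr6,
      PiLp.neg_apply] <;> ring

lemma c7_neg_left (x y : E7) : cross7 (-x) y = -cross7 x y := by
  ext i
  fin_cases i <;>
    simp only [fm0, fm1, fm2, fm3, fm4, fm5, fm6, cr0, cr1, cr2, cr3, cr4, cr5, cr6,
      PiLp.neg_apply] <;> ring

lemma c7_neg_right (x y : E7) : cross7 x (-y) = -cross7 x y := by
  ext i
  fin_cases i <;>
    simp only [fm0, fm1, fm2, fm3, fm4, fm5, fm6, cr0, cr1, cr2, cr3, cr4, cr5, cr6,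
      PiLp.neg_apply] <;> ring

lemma ic_left (x y : E7) : ⟪cross7 x y, x⟫_ℝ = 0 := by
  rw [inner7]; simp only [cr0, cr1, cr2, cr3, cr4, cr5, cr6]; ring

lemma ic_right (x y : E7) : ⟪cross7 x y, y⟫_ℝ = 0 := by
  rw [inner7]; simp only [cr0, cr1, cr2, cr3, cr4, cr5, cr6]; ring

lemma ic_swap (x y z : E7) : ⟪cross7 x y, z⟫_ℝ = -⟪cross7 x z, y⟫_ℝ := by
  rw [inner7, inner7]; simp only [cr0, cr1, cr2, cr3, cr4, cr5, cr6]; ring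

lemma ic_cross (x y z : E7) :
    ⟪cross7 x y, cross7 x z⟫_ℝ = ⟪x,x⟫_ℝ * ⟪y,z⟫_ℝ - ⟪x,y⟫_ℝ * ⟪x,z⟫_ℝ := by
  simp only [inner7]
  simp only [cr0, cr1, cr2, cr3, cr4, cr5, cr6]
  ring

lemma I4 (x y : E7) : cross7 x (cross7 x y) = ⟪x,y⟫_ℝ • x - ⟪x,x⟫_ℝ • y := by
  ext i
  simp only [PiLp.sub_apply, PiLp.smul_apply, smul_eq_mul, inner7]
  fin_cases i <;>
    simp only [fm0, fm1, fm2, fm3, fm4, fm5, fm6, cr0, cr1, cr2, cr3, cr4, cr5, cr6] <;> ring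

lemma I6 (x y z : E7) : cross7 x (cross7 y z) + cross7 (cross7 x y) z
    = (2*⟪x,z⟫_ℝ) • y - ⟪y,z⟫_ℝ • x - ⟪x,y⟫_ℝ • z := by
  ext i
  simp only [PiLp.sub_apply, PiLp.add_apply, PiLp.smul_apply, smul_eq_mul, inner7]
  fin_cases i <;>
    simp only [fm0, fm1, fm2, fm3, fm4, fm5, fm6, cr0, cr1, cr2, cr3, cr4, cr5, cr6] <;> ring

lemma vec7_0 {α : Type*} (a0 a1 a2 a3 a4 a5 a6 : α) : ![a0,a1,a2,a3,a4,a5,a6] 0 = a0 := rfl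
lemma vec7_1 {α : Type*} (a0 a1 a2 a3 a4 a5 a6 : α) : ![a0,a1,a2,a3,a4,a5,a6] 1 = a1 := rfl
lemma vec7_2 {α : Type*} (a0 a1 a2 a3 a4 a5 a6 : α) : ![a0,a1,a2,a3,a4,a5,a6] 2 = a2 := rfl
lemma vec7_3 {α : Type*} (a0 a1 a2 a3 a4 a5 a6 : α) : ![a0,a1,a2,a3,a4,a5,a6] 3 = a3 := rfl
lemma vec7_4 {α : Type*} (a0 a1 a2 a3 a4 a5 a6 : α) : ![a0,a1,a2,a3,a4,a5,a6] 4 = a4 := rfl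
lemma vec7_5 {α : Type*} (a0 a1 a2 a3 a4 a5 a6 : α) : ![a0,a1,a2,a3,a4,a5,a6] 5 = a5 := rfl
lemma vec7_6 {α : Type*} (a0 a1 a2 a3 a4 a5 a6 : α) : ![a0,a1,a2,a3,a4,a5,a6] 6 = a6 := rfl

lemma phi_add1 (x x' y z : E7) : phi (x + x') y z = phi x y z + phi x' y z := by
  simp only [phi, det3, PiLp.add_apply]; ring
lemma phi_add2 (x y y' z : E7) : phi x (y + y') z = phi x y z + phi x y' z := by
  simp only [phi, det3, PiLp.add_apply]; ring
lemma phi_add3 (x y z z' : E7) : phi x y (z + z') = phi x y z + phi x y z' := by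
  simp only [phi, det3, PiLp.add_apply]; ring
lemma phi_smul1 (c : ℝ) (x y z : E7) : phi (c • x) y z = c * phi x y z := by
  simp only [phi, det3, PiLp.smul_apply, smul_eq_mul]; ring
lemma phi_smul2 (c : ℝ) (x y z : E7) : phi x (c • y) z = c * phi x y z := by
  simp only [phi, det3, PiLp.smul_apply, smul_eq_mul]; ring
lemma phi_smul3 (c : ℝ) (x y z : E7) : phi x y (c • z) = c * phi x y z := by
  simp only [phi, det3, PiLp.smul_apply, smul_eq_mul]; ring
lemma phi_zero1 (y z : E7) : phi 0 y z = 0 := by simp only [phi, det3, PiLp.zero_apply]; ring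
lemma phi_zero2 (y z : E7) : phi y 0 z = 0 := by simp only [phi, det3, PiLp.zero_apply]; ring
lemma phi_zero3 (y z : E7) : phi y z 0 = 0 := by simp only [phi, det3, PiLp.zero_apply]; ring

lemma phi_sum1 {ι : Type*} (s : Finset ι) (f : ι → E7) (y z : E7) :
    phi (∑ i ∈ s, f i) y z = ∑ i ∈ s, phi (f i) y z := by
  classical
  induction s using Finset.induction_on with
  | empty => simp [phi_zero1]
  | insert _ _ h ih => rw [Finset.sum_insert h, Finset.sum_insert h, phi_add1, ih]
lemma phi_sum2 {ι : Type*} (s : Finset ι) (f : ι → E7) (x z : E7) :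
    phi x (∑ i ∈ s, f i) z = ∑ i ∈ s, phi x (f i) z := by
  classical
  induction s using Finset.induction_on with
  | empty => simp [phi_zero2]
  | insert _ _ h ih => rw [Finset.sum_insert h, Finset.sum_insert h, phi_add2, ih]
lemma phi_sum3 {ι : Type*} (s : Finset ι) (f : ι → E7) (x y : E7) :
    phi x y (∑ i ∈ s, f i) = ∑ i ∈ s, phi x y (f i) := by
  classical
  induction s using Finset.induction_on with
  | empty => simp [phi_zero3]
  | insert _ _ h ih => rw [Finset.sum_insert h, Finset.sum_insert h, phi_add3, ih]

lemma phi_expand (f : Fin 7 → E7) (x y z : E7) :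
    phi (∑ i, x i • f i) (∑ j, y j • f j) (∑ k, z k • f k)
      = ∑ i, ∑ j, ∑ k, x i * y j * z k * phi (f i) (f j) (f k) := by
  rw [phi_sum1]
  refine Finset.sum_congr rfl fun i _ => ?_
  rw [phi_smul1, phi_sum2, Finset.mul_sum]
  refine Finset.sum_congr rfl fun j _ => ?_
  rw [phi_smul2, phi_sum3, Finset.mul_sum, Finset.mul_sum]
  refine Finset.sum_congr rfl fun k _ => ?_
  rw [phi_smul3]
  ring

lemma sum_single (x : E7) : ∑ i, x i • (EuclideanSpace.single i 1 : E7) = x := by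
  have h := (EuclideanSpace.basisFun (Fin 7) ℝ).sum_repr x
  simpa [EuclideanSpace.basisFun_repr, EuclideanSpace.basisFun_apply] using h

set_option maxHeartbeats 2000000 in
lemma exists_frame (a b : E7) (ha1 : ‖a‖ = 1) (hb1 : ‖b‖ = 1) (hab : ⟪a,b⟫_ℝ = 0) :
    ∃ g : E7 ≃ₗᵢ[ℝ] E7,
      (∀ x y z, phi (g x) (g y) (g z) = phi x y z) ∧
      g (EuclideanSpace.single 0 1) = a ∧ g (EuclideanSpace.single 1 1) = b := by
  classical
  have hfr : Module.finrank ℝ (EuclideanSpace ℝ (Fin 7)) = 7 := finrank_euclideanSpace_fin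
  have ha : ⟪a,a⟫_ℝ = 1 := by rw [real_inner_self_eq_norm_mul_norm, ha1]; norm_num
  have hb : ⟪b,b⟫_ℝ = 1 := by rw [real_inner_self_eq_norm_mul_norm, hb1]; norm_num
  -- find a unit vector d orthogonal to a, b, and cross7 a b
  have hKne : Submodule.span ℝ (Set.range ![a, b, cross7 a b]) ≠ ⊤ := by
    intro h
    have h7 := finrank_le_of_span_eq_top h
    rw [hfr] at h7
    simp [Fintype.card_fin] at h7
  have hbotne : (Submodule.span ℝ (Set.range ![a, b, cross7 a b]))ᗮ ≠ ⊥ := fun hbot =>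
    hKne (Submodule.orthogonal_eq_bot_iff.mp hbot)
  obtain ⟨d₀, hd₀K, hd₀ne⟩ := Submodule.exists_mem_ne_zero_of_ne_bot hbotne
  have horth : ∀ u ∈ Submodule.span ℝ (Set.range ![a, b, cross7 a b]), ⟪u, d₀⟫_ℝ = 0 :=
    (Submodule.mem_orthogonal _ d₀).mp hd₀K
  have hd1 : ‖(‖d₀‖⁻¹ : ℝ) • d₀‖ = 1 := norm_smul_inv_norm hd₀ne
  set d : E7 := (‖d₀‖⁻¹ : ℝ) • d₀ with hddef
  have hd : ⟪d,d⟫_ℝ = 1 := by rw [real_inner_self_eq_norm_mul_norm, hd1]; norm_num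
  have had : ⟪a,d⟫_ℝ = 0 := by
    rw [hddef, real_inner_smul_right, horth a (Submodule.subset_span ⟨0, rfl⟩), mul_zero]
  have hbd : ⟪b,d⟫_ℝ = 0 := by
    rw [hddef, real_inner_smul_right, horth b (Submodule.subset_span ⟨1, rfl⟩), mul_zero]
  have hcd : ⟪cross7 a b, d⟫_ℝ = 0 := by
    rw [hddef, real_inner_smul_right, horth (cross7 a b) (Submodule.subset_span ⟨2, rfl⟩), mul_zero]
  clear hd1 hd₀K hd₀ne horth hbotne hKne hddef
  have hcc : ⟪cross7 a b, cross7 a b⟫_ℝ = 1 := by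
    rw [ic_cross, ha, hb, hab]; ring
  have hpp : ⟪cross7 a d, cross7 a d⟫_ℝ = 1 := by
    rw [ic_cross, ha, hd, had]; ring
  have hqq : ⟪cross7 b d, cross7 b d⟫_ℝ = 1 := by
    rw [ic_cross, hb, hd, hbd]; ring
  have hrr : ⟪cross7 (cross7 a b) d, cross7 (cross7 a b) d⟫_ℝ = 1 := by
    rw [ic_cross, hcc, hd, hcd]; ring
  have hba : ⟪b, a⟫_ℝ = 0 := by
    rw [real_inner_comm]; exact hab
  have hda : ⟪d, a⟫_ℝ = 0 := by
    rw [real_inner_comm]; exact had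
  have hdb : ⟪d, b⟫_ℝ = 0 := by
    rw [real_inner_comm]; exact hbd
  have hca : ⟪cross7 a b, a⟫_ℝ = 0 := by
    exact ic_left a b
  have hac : ⟪a, cross7 a b⟫_ℝ = 0 := by
    rw [real_inner_comm]; exact hca
  have hcb : ⟪cross7 a b, b⟫_ℝ = 0 := by
    exact ic_right a b
  have hbc : ⟪b, cross7 a b⟫_ℝ = 0 := by
    rw [real_inner_comm]; exact hcb
  have hdc : ⟪d, cross7 a b⟫_ℝ = 0 := by
    rw [real_inner_comm]; exact hcd
  have hpa : ⟪cross7 a d, a⟫_ℝ = 0 := by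
    exact ic_left a d
  have hap : ⟪a, cross7 a d⟫_ℝ = 0 := by
    rw [real_inner_comm]; exact hpa
  have hpd : ⟪cross7 a d, d⟫_ℝ = 0 := by
    exact ic_right a d
  have hdp : ⟪d, cross7 a d⟫_ℝ = 0 := by
    rw [real_inner_comm]; exact hpd
  have hqb : ⟪cross7 b d, b⟫_ℝ = 0 := by
    exact ic_left b d
  have hbq : ⟪b, cross7 b d⟫_ℝ = 0 := by
    rw [real_inner_comm]; exact hqb
  have hqd : ⟪cross7 b d, d⟫_ℝ = 0 := by
    exact ic_right b d
  have hdq : ⟪d, cross7 b d⟫_ℝ = 0 := by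
    rw [real_inner_comm]; exact hqd
  have hrc : ⟪cross7 (cross7 a b) d, cross7 a b⟫_ℝ = 0 := by
    exact ic_left (cross7 a b) d
  have hcr : ⟪cross7 a b, cross7 (cross7 a b) d⟫_ℝ = 0 := by
    rw [real_inner_comm]; exact hrc
  have hrd : ⟪cross7 (cross7 a b) d, d⟫_ℝ = 0 := by
    exact ic_right (cross7 a b) d
  have hdr : ⟪d, cross7 (cross7 a b) d⟫_ℝ = 0 := by
    rw [real_inner_comm]; exact hrd
  have hpb : ⟪cross7 a d, b⟫_ℝ = 0 := by
    rw [ic_swap, hcd]; ring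
  have hbp : ⟪b, cross7 a d⟫_ℝ = 0 := by
    rw [real_inner_comm]; exact hpb
  have hpc : ⟪cross7 a d, cross7 a b⟫_ℝ = 0 := by
    rw [ic_cross, hdb, had]; ring
  have hcp : ⟪cross7 a b, cross7 a d⟫_ℝ = 0 := by
    rw [real_inner_comm]; exact hpc
  have hqa : ⟪cross7 b d, a⟫_ℝ = 0 := by
    rw [ic_swap, c7_anticomm a b, inner_neg_left, hcd]; ring
  have haq : ⟪a, cross7 b d⟫_ℝ = 0 := by
    rw [real_inner_comm]; exact hqa
  have hqc : ⟪cross7 b d, cross7 a b⟫_ℝ = 0 := by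
    rw [c7_anticomm b a, inner_neg_right, ic_cross, hda, hba]; ring
  have hcq : ⟪cross7 a b, cross7 b d⟫_ℝ = 0 := by
    rw [real_inner_comm]; exact hqc
  have hqp : ⟪cross7 b d, cross7 a d⟫_ℝ = 0 := by
    rw [c7_anticomm d a, c7_anticomm d b, inner_neg_left, inner_neg_right, ic_cross, hba, hda]; ring
  have hpq : ⟪cross7 a d, cross7 b d⟫_ℝ = 0 := by
    rw [real_inner_comm]; exact hqp
  have hvac : cross7 a (cross7 a b) = -b := by
    rw [I4, hab, ha]; simp
  have hvca : cross7 (cross7 a b) a = b := by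
    rw [c7_anticomm a (cross7 a b), hvac, neg_neg]
  have hvbc : cross7 b (cross7 a b) = a := by
    rw [c7_anticomm b a, c7_neg_right, I4, hba, hb]; simp
  have hvcb : cross7 (cross7 a b) b = -a := by
    rw [c7_anticomm b (cross7 a b), hvbc]
  have hvap : cross7 a (cross7 a d) = -d := by
    rw [I4, had, ha]; simp
  have hvpa : cross7 (cross7 a d) a = d := by
    rw [c7_anticomm a (cross7 a d), hvap, neg_neg]
  have hvbq : cross7 b (cross7 b d) = -d := by
    rw [I4, hbd, hb]; simp
  have hvqb : cross7 (cross7 b d) b = d := by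
    rw [c7_anticomm b (cross7 b d), hvbq, neg_neg]
  have hvcr : cross7 (cross7 a b) (cross7 (cross7 a b) d) = -d := by
    rw [I4, hcd, hcc]; simp
  have hvrc : cross7 (cross7 (cross7 a b) d) (cross7 a b) = d := by
    rw [c7_anticomm (cross7 a b) (cross7 (cross7 a b) d), hvcr, neg_neg]
  have hvdp : cross7 d (cross7 a d) = a := by
    rw [c7_anticomm d a, c7_neg_right, I4, hda, hd]; simp
  have hvpd : cross7 (cross7 a d) d = -a := by
    rw [c7_anticomm d (cross7 a d), hvdp]
  have hvdq : cross7 d (cross7 b d) = b := by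
    rw [c7_anticomm d b, c7_neg_right, I4, hdb, hd]; simp
  have hvqd : cross7 (cross7 b d) d = -b := by
    rw [c7_anticomm d (cross7 b d), hvdq]
  have hvdr : cross7 d (cross7 (cross7 a b) d) = cross7 a b := by
    rw [c7_anticomm d (cross7 a b), c7_neg_right, I4, hdc, hd]; simp
  have hvrd : cross7 (cross7 (cross7 a b) d) d = -(cross7 a b) := by
    rw [c7_anticomm d (cross7 (cross7 a b) d), hvdr]
  have hvba : cross7 b a = -(cross7 a b) := c7_anticomm a b
  have hvda : cross7 d a = -(cross7 a d) := c7_anticomm a d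
  have hvdb : cross7 d b = -(cross7 b d) := c7_anticomm b d
  have hvdc : cross7 d (cross7 a b) = -(cross7 (cross7 a b) d) := c7_anticomm (cross7 a b) d
  have hvaq : cross7 a (cross7 b d) = -(cross7 (cross7 a b) d) := by
    have h := I6 a b d
    rw [had, hbd, hab] at h
    simp only [mul_zero, zero_smul, sub_zero] at h
    exact eq_neg_of_add_eq_zero_left h
  have hvqa : cross7 (cross7 b d) a = cross7 (cross7 a b) d := by
    rw [c7_anticomm a (cross7 b d), hvaq, neg_neg]
  have hvar : cross7 a (cross7 (cross7 a b) d) = cross7 b d := by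
    have h := I6 a (cross7 a b) d
    rw [had, hcd, hac, hvac, c7_neg_left] at h
    simp only [mul_zero, zero_smul, sub_zero] at h
    have h2 := eq_neg_of_add_eq_zero_left h
    rwa [neg_neg] at h2
  have hvra : cross7 (cross7 (cross7 a b) d) a = -(cross7 b d) := by
    rw [c7_anticomm a (cross7 (cross7 a b) d), hvar]
  have hvbp : cross7 b (cross7 a d) = cross7 (cross7 a b) d := by
    have h := I6 b a d
    rw [hbd, had, hba, hvba, c7_neg_left] at h
    simp only [mul_zero, zero_smul, sub_zero] at h
    have h2 := eq_neg_of_add_eq_zero_left h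
    rwa [neg_neg] at h2
  have hvpb : cross7 (cross7 a d) b = -(cross7 (cross7 a b) d) := by
    rw [c7_anticomm b (cross7 a d), hvbp]
  have hvbr : cross7 b (cross7 (cross7 a b) d) = -(cross7 a d) := by
    have h := I6 b (cross7 a b) d
    rw [hbd, hcd, hbc, hvbc] at h
    simp only [mul_zero, zero_smul, sub_zero] at h
    exact eq_neg_of_add_eq_zero_left h
  have hvrb : cross7 (cross7 (cross7 a b) d) b = cross7 a d := by
    rw [c7_anticomm b (cross7 (cross7 a b) d), hvbr, neg_neg]
  have hvcp : cross7 (cross7 a b) (cross7 a d) = -(cross7 b d) := by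
    have h := I6 (cross7 a b) a d
    rw [hcd, had, hca, hvca] at h
    simp only [mul_zero, zero_smul, sub_zero] at h
    exact eq_neg_of_add_eq_zero_left h
  have hvpc : cross7 (cross7 a d) (cross7 a b) = cross7 b d := by
    rw [c7_anticomm (cross7 a b) (cross7 a d), hvcp, neg_neg]
  have hvcq : cross7 (cross7 a b) (cross7 b d) = cross7 a d := by
    have h := I6 (cross7 a b) b d
    rw [hcd, hbd, hcb, hvcb, c7_neg_left] at h
    simp only [mul_zero, zero_smul, sub_zero] at h
    have h2 := eq_neg_of_add_eq_zero_left h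
    rwa [neg_neg] at h2
  have hvqc : cross7 (cross7 b d) (cross7 a b) = -(cross7 a d) := by
    rw [c7_anticomm (cross7 a b) (cross7 b d), hvcq]
  have hvpq : cross7 (cross7 a d) (cross7 b d) = -(cross7 a b) := by
    have h := I6 (cross7 a d) b d
    rw [hpd, hbd, hpb, hvpb, c7_neg_left, hvrd, neg_neg] at h
    simp only [mul_zero, zero_smul, sub_zero] at h
    exact eq_neg_of_add_eq_zero_left h
  have hvqp : cross7 (cross7 b d) (cross7 a d) = cross7 a b := by
    rw [c7_anticomm (cross7 a d) (cross7 b d), hvpq, neg_neg]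
  have hvpr : cross7 (cross7 a d) (cross7 (cross7 a b) d) = b := by
    have h := I6 (cross7 a d) (cross7 a b) d
    rw [hpd, hcd, hpc, hvpc, hvqd] at h
    simp only [mul_zero, zero_smul, sub_zero] at h
    have h2 := eq_neg_of_add_eq_zero_left h
    rwa [neg_neg] at h2
  have hvrp : cross7 (cross7 (cross7 a b) d) (cross7 a d) = -b := by
    rw [c7_anticomm (cross7 a d) (cross7 (cross7 a b) d), hvpr]
  have hvqr : cross7 (cross7 b d) (cross7 (cross7 a b) d) = -a := by
    have h := I6 (cross7 b d) (cross7 a b) d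
    rw [hqd, hcd, hqc, hvqc, c7_neg_left, hvpd, neg_neg] at h
    simp only [mul_zero, zero_smul, sub_zero] at h
    exact eq_neg_of_add_eq_zero_left h
  have hvrq : cross7 (cross7 (cross7 a b) d) (cross7 b d) = a := by
    rw [c7_anticomm (cross7 b d) (cross7 (cross7 a b) d), hvqr, neg_neg]
  have hra : ⟪cross7 (cross7 a b) d, a⟫_ℝ = 0 := by
    rw [ic_swap, hvca, hbd]; ring
  have har : ⟪a, cross7 (cross7 a b) d⟫_ℝ = 0 := by
    rw [real_inner_comm]; exact hra
  have hrb : ⟪cross7 (cross7 a b) d, b⟫_ℝ = 0 := by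
    rw [ic_swap, hvcb, inner_neg_left, had]; ring
  have hbr : ⟪b, cross7 (cross7 a b) d⟫_ℝ = 0 := by
    rw [real_inner_comm]; exact hrb
  have hrp : ⟪cross7 (cross7 a b) d, cross7 a d⟫_ℝ = 0 := by
    rw [c7_anticomm d (cross7 a b), c7_anticomm d a, inner_neg_left, inner_neg_right,
      ic_cross, hca, hdc]; ring
  have hpr : ⟪cross7 a d, cross7 (cross7 a b) d⟫_ℝ = 0 := by
    rw [real_inner_comm]; exact hrp
  have hrq : ⟪cross7 (cross7 a b) d, cross7 b d⟫_ℝ = 0 := by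
    rw [c7_anticomm d (cross7 a b), c7_anticomm d b, inner_neg_left, inner_neg_right,
      ic_cross, hcb, hdc]; ring
  have hqr : ⟪cross7 b d, cross7 (cross7 a b) d⟫_ℝ = 0 := by
    rw [real_inner_comm]; exact hrq
  -- the orthonormal frame
  have onb : Orthonormal ℝ (![a, b, d, cross7 (cross7 a b) d, -(cross7 a b), -(cross7 a d), -(cross7 b d)] : Fin 7 → E7) := by
    rw [orthonormal_iff_ite]
    intro i j
    fin_cases i <;> fin_cases j <;>
      simp [-inner_self_eq_norm_sq_to_K, fm0, fm1, fm2, fm3, fm4, fm5, fm6, vec7_0, vec7_1, vec7_2, vec7_3, vec7_4, vec7_5, vec7_6, c7_self, c7_neg_left, c7_neg_right, inner_neg_left, inner_neg_right, inner_zero_left, inner_zero_right, hvac, hvca, hvbc, hvcb, hvap, hvpa, hvbq, hvqb, hvcr, hvrc, hvdp, hvpd, hvdq, hvqd, hvdr, hvrd, hvba, hvda, hvdb, hvdc, hvaq, hvqa, hvar, hvra, hvbp, hvpb, hvbr, hvrb, hvcp, hvpc, hvcq, hvqc, hvpq, hvqp, hvpr, hvrp, hvqr, hvrq, ha, hb,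 hd, hcc, hpp, hqq, hrr, hab, hba, had, hda, hbd, hdb, hca, hac, hcb, hbc, hcd, hdc, hpa, hap, hpb, hbp, hpc, hcp, hpd, hdp, hqa, haq, hqb, hbq, hqc, hcq, hqd, hdq, hqp, hpq, hrc, hcr, hrd, hdr, hra, har, hrb, hbr, hrp, hpr, hrq, hqr]
  have key : ∀ i j k : Fin 7,
      phi (![a, b, d, cross7 (cross7 a b) d, -(cross7 a b), -(cross7 a d), -(cross7 b d)] i)
        (![a, b, d, cross7 (cross7 a b) d, -(cross7 a b), -(cross7 a d), -(cross7 b d)] j)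
        (![a, b, d, cross7 (cross7 a b) d, -(cross7 a b), -(cross7 a d), -(cross7 b d)] k)
      = phi (EuclideanSpace.single i 1) (EuclideanSpace.single j 1) (EuclideanSpace.single k 1) := by
    intro i j k
    fin_cases i <;> fin_cases j <;> fin_cases k <;>
      (rw [← inner_cross7]
       simp only [fm0, fm1, fm2, fm3, fm4, fm5, fm6, vec7_0, vec7_1, vec7_2, vec7_3, vec7_4, vec7_5, vec7_6, c7_self, c7_neg_left, c7_neg_right, inner_neg_left, inner_neg_right, inner_zero_left, inner_zero_right, hvac, hvca, hvbc, hvcb, hvap, hvpa, hvbq, hvqb, hvcr, hvrc, hvdp, hvpd, hvdq, hvqd, hvdr, hvrd, hvba, hvda, hvdb, hvdc, hvaq, hvqa, hvar, hvra, hvbp, hvpb, hvbr, hvrb, hvcp, hvpc, hvcq, hvqc, hvpq, hvqp, hvpr, hvrp, hvqr, hvrq, ha, hb, hd, hcc, hpp, hqq, hrr, hab, hba, had, hda, hbd, hdb, hca, hac, hcb, hbc, hcd, hdc, hpa, hap, hpb, hbp, hpc, hcp, hpd, hdp, hqa, haq, hqb, hbq, hqc, hcq, hqd, hdq, hqp,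 hpq, hrc, hcr, hrd, hdr, hra, har, hrb, hbr, hrp, hpr, hrq, hqr]
       simp [phi, det3, EuclideanSpace.single_apply]) <;>
      norm_num
  -- build the isometry
  have cardeq : Fintype.card (Fin 7) = Module.finrank ℝ (EuclideanSpace ℝ (Fin 7)) := by
    rw [hfr, Fintype.card_fin]
  let bu : Module.Basis (Fin 7) ℝ (EuclideanSpace ℝ (Fin 7)) := basisOfOrthonormalOfCardEqFinrank onb cardeq
  have hbu : ⇑bu = ![a, b, d, cross7 (cross7 a b) d, -(cross7 a b), -(cross7 a d), -(cross7 b d)] :=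
    coe_basisOfOrthonormalOfCardEqFinrank onb cardeq
  let ob : OrthonormalBasis (Fin 7) ℝ (EuclideanSpace ℝ (Fin 7)) :=
    bu.toOrthonormalBasis (by rwa [hbu])
  have hob : ⇑ob = ![a, b, d, cross7 (cross7 a b) d, -(cross7 a b), -(cross7 a d), -(cross7 b d)] := by
    rw [Module.Basis.coe_toOrthonormalBasis, hbu]
  refine ⟨ob.repr.symm, ?_, ?_, ?_⟩
  · intro x y z
    have hg : ∀ w : E7, ob.repr.symm w
        = ∑ i, w i • (![a, b, d, cross7 (cross7 a b) d, -(cross7 a b), -(cross7 a d), -(cross7 b d)] i) := by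
      intro w
      rw [← ob.sum_repr_symm]
      simp [hob]
    rw [hg x, hg y, hg z, phi_expand]
    simp only [key]
    rw [← phi_expand, sum_single, sum_single, sum_single]
  · rw [OrthonormalBasis.repr_symm_single, hob, vec7_0]
  · rw [OrthonormalBasis.repr_symm_single, hob, vec7_1]


/-- The stabilizer `G₂` of `φ` acts transitively on orthonormal 2-frames in
`ℝ⁷` (hence on the oriented Grassmannian of 2-planes): for any orthonormal
pairs `(v₁, v₂)` and `(w₁, w₂)` there is a linear isometry of `ℝ⁷`
preserving `φ` carrying `v₁` to `w₁` and `v₂` to `w₂`. -/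
theorem G2_transitive_on_2frames (v₁ v₂ w₁ w₂ : EuclideanSpace ℝ (Fin 7))
    (hv₁ : ‖v₁‖ = 1) (hv₂ : ‖v₂‖ = 1) (hv : ⟪v₁, v₂⟫_ℝ = 0)
    (hw₁ : ‖w₁‖ = 1) (hw₂ : ‖w₂‖ = 1) (hw : ⟪w₁, w₂⟫_ℝ = 0) :
    ∃ g : EuclideanSpace ℝ (Fin 7) ≃ₗᵢ[ℝ] EuclideanSpace ℝ (Fin 7),
      (∀ x y z, phi (g x) (g y) (g z) = phi x y z) ∧ g v₁ = w₁ ∧ g v₂ = w₂ := by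
  obtain ⟨gv, hgv, hgv1, hgv2⟩ := exists_frame v₁ v₂ hv₁ hv₂ hv
  obtain ⟨gw, hgw, hgw1, hgw2⟩ := exists_frame w₁ w₂ hw₁ hw₂ hw
  refine ⟨gv.symm.trans gw, ?_, ?_, ?_⟩
  · intro x y z
    simp only [LinearIsometryEquiv.trans_apply]
    rw [hgw]
    have h := hgv (gv.symm x) (gv.symm y) (gv.symm z)
    rw [gv.apply_symm_apply, gv.apply_symm_apply, gv.apply_symm_apply] at h
    exact h.symm
  · simp only [LinearIsometryEquiv.trans_apply]
    rw [← hgv1, LinearIsometryEquiv.symm_apply_apply, hgw1]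
  · simp only [LinearIsometryEquiv.trans_apply]
    rw [← hgv2, LinearIsometryEquiv.symm_apply_apply, hgw2]
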